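/- Let N be a finite state space with a canonical path γ_{IF} assigned to each ordered pair (I,F) of distinct states, each path being a sequence of transitions (edges) of a Markov chain with weights w_e = π(M)P(M,M'). Suppose that for every transition e, ∑_{(I,F) : e ∈ γ_{IF}} π(I)π(F) ≤ b·w_e. Then for every S with 0 < π(S) ≤ 1/2, the flow across the cut satisfies ∑_{e ∈ cut(S)} w_e ≥ (1/b)·∑_{I∈S,F∈Sᶜ} π(I)π(F) ≥ π(S)/(2b), and hence the conductance Φ ≥ 1/(2b). -/

import Mathlib

theorem canonical_paths_give_conductance_bound {N : Type*} [Fintype N] [DecidableEq N]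
    (P : N → N → ℝ) (π : N → ℝ)
    (hπ_nonneg : ∀ M : N, 0 ≤ π M) (hπ_sum : ∑ M : N, π M = 1)
    (w : N × N → ℝ) (hw : ∀ e : N × N, w e = π e.1 * P e.1 e.2)
    (hw_nonneg : ∀ e : N × N, 0 ≤ w e)
    (γ : N → N → Finset (N × N)) (b : ℝ) (hb : 0 < b)
    (hload : ∀ e : N × N,
      (∑ p ∈ Finset.univ.filter (fun p : N × N => e ∈ γ p.1 p.2), π p.1 * π p.2) ≤ b * w e)
    (hcross : ∀ (S : Finset N) (I F : N), I ∈ S → F ∉ S →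
      ∃ e ∈ γ I F, e.1 ∈ S ∧ e.2 ∉ S ∧ 0 < P e.1 e.2) :
    ∀ S : Finset N, 0 < ∑ M ∈ S, π M → (∑ M ∈ S, π M) ≤ 1 / 2 →
      ((1 / b) * ∑ I ∈ S, ∑ F ∈ Sᶜ, π I * π F ≤
        ∑ e ∈ Finset.univ.filter (fun e : N × N => e.1 ∈ S ∧ e.2 ∉ S ∧ 0 < P e.1 e.2), w e) ∧
      ((∑ M ∈ S, π M) / (2 * b) ≤
        ∑ e ∈ Finset.univ.filter (fun e : N × N => e.1 ∈ S ∧ e.2 ∉ S ∧ 0 < P e.1 e.2), w e) ∧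
      (1 / (2 * b) ≤
        (∑ e ∈ Finset.univ.filter (fun e : N × N => e.1 ∈ S ∧ e.2 ∉ S ∧ 0 < P e.1 e.2), w e) /
          (∑ M ∈ S, π M)) := by
  intro S hS0 hShalf
  set cut := Finset.univ.filter (fun e : N × N => e.1 ∈ S ∧ e.2 ∉ S ∧ 0 < P e.1 e.2) with hcut
  set X := ∑ I ∈ S, ∑ F ∈ Sᶜ, π I * π F with hX
  have hg : ∀ p : N × N, 0 ≤ π p.1 * π p.2 := fun p =>
    mul_nonneg (hπ_nonneg _) (hπ_nonneg _)
  -- key: X ≤ b * cutsum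
  have key : X ≤ b * ∑ e ∈ cut, w e := by
    have hXprod : X = ∑ p ∈ S ×ˢ Sᶜ, π p.1 * π p.2 := by rw [hX, Finset.sum_product]
    have step1 : ∀ p ∈ S ×ˢ Sᶜ,
        π p.1 * π p.2 ≤ ∑ e ∈ cut, (if e ∈ γ p.1 p.2 then π p.1 * π p.2 else 0) := by
      intro p hp
      rw [Finset.mem_product] at hp
      obtain ⟨e, he, h1, h2, h3⟩ := hcross S p.1 p.2 hp.1 (by simpa using hp.2)
      have hecut : e ∈ cut := by simp [hcut, h1, h2, h3]
      have := Finset.single_le_sum (f := fun e => if e ∈ γ p.1 p.2 then π p.1 * π p.2 else 0)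
        (fun i _ => by split_ifs <;> simp [hg p]) hecut
      simpa [he] using this
    calc X ≤ ∑ p ∈ S ×ˢ Sᶜ, ∑ e ∈ cut, (if e ∈ γ p.1 p.2 then π p.1 * π p.2 else 0) := by
            rw [hXprod]; exact Finset.sum_le_sum step1
      _ = ∑ e ∈ cut, ∑ p ∈ (S ×ˢ Sᶜ).filter (fun p => e ∈ γ p.1 p.2), π p.1 * π p.2 := by
            rw [Finset.sum_comm]
            exact Finset.sum_congr rfl fun e _ => (Finset.sum_filter ..).symm
      _ ≤ ∑ e ∈ cut, ∑ p ∈ Finset.univ.filter (fun p : N × N => e ∈ γ p.1 p.2),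
            π p.1 * π p.2 := by
            refine Finset.sum_le_sum fun e _ => Finset.sum_le_sum_of_subset_of_nonneg ?_
              (fun p _ _ => hg p)
            intro p hp
            simp only [Finset.mem_filter] at hp ⊢
            exact ⟨Finset.mem_univ _, hp.2⟩
      _ ≤ ∑ e ∈ cut, b * w e := Finset.sum_le_sum fun e _ => hload e
      _ = b * ∑ e ∈ cut, w e := (Finset.mul_sum ..).symm
  have h1 : (1 / b) * X ≤ ∑ e ∈ cut, w e := by
    rw [div_mul_eq_mul_div, one_mul, div_le_iff₀ hb, mul_comm]
    exact key
  -- X = πS * (1 - πS)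
  have hcompl : ∑ M ∈ Sᶜ, π M = 1 - ∑ M ∈ S, π M := by
    have := Finset.sum_add_sum_compl S π
    linarith [hπ_sum ▸ this]
  have hXeq : X = (∑ M ∈ S, π M) * (1 - ∑ M ∈ S, π M) := by
    rw [hX, ← Finset.sum_mul_sum, hcompl]
  have hXge : (∑ M ∈ S, π M) * (1 / 2) ≤ X := by
    rw [hXeq]
    have h1' : (1:ℝ)/2 ≤ 1 - ∑ M ∈ S, π M := by linarith
    nlinarith
  have h2 : (∑ M ∈ S, π M) / (2 * b) ≤ ∑ e ∈ cut, w e := by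
    calc (∑ M ∈ S, π M) / (2 * b) = (1 / b) * ((∑ M ∈ S, π M) * (1 / 2)) := by
          rw [div_eq_mul_inv, mul_inv]; ring
      _ ≤ (1 / b) * X := by
          apply mul_le_mul_of_nonneg_left hXge (by positivity)
      _ ≤ ∑ e ∈ cut, w e := h1
  refine ⟨h1, h2, ?_⟩
  rw [le_div_iff₀ hS0]
  calc 1 / (2 * b) * ∑ M ∈ S, π M = (∑ M ∈ S, π M) / (2 * b) := by ring
    _ ≤ _ := h2
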